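/- Let (C,d_C) and (D,d_D) be nonarchimedean normed chain complexes over K, where the absolute value of K is surjective onto the positive reals. Let f : C → D be a continuous K-linear chain map (f∘d_C = d_D∘f) with ‖f(x)‖ ≤ ‖x‖ for all x ∈ C, and suppose the induced O-module map H(C_{>0}) → H(D_{>0}) is an isomorphism (f is a filtered quasi-isomorphism). Then the boundary depths agree: β(C,d_C) = β(D,d_D). -/

import Mathlib

open scoped ENNReal

open Classical in
/-- The boundary depth `β(C,d) ∈ [0,∞]` of a norm-nonincreasing differential `d` on a
nonarchimedean normed chain complex `C`. -/
noncomputable def boundaryDepth {C : Type*} [NormedAddCommGroup C] (d : C → C) : ℝ≥0∞ :=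
  if ∀ x, d x = 0 then 0
  else
    ⨆ x ∈ {x : C | x ≠ 0 ∧ ∃ y, d y = x},
      ⨅ y ∈ {y : C | d y = x}, ENNReal.ofReal (Real.log ‖y‖ - Real.log ‖x‖)

private lemma bd_sup_form {C : Type*} [NormedAddCommGroup C] (d : C → C) :
    boundaryDepth d
    = ⨆ x ∈ {x : C | x ≠ 0 ∧ ∃ y, d y = x},
        ⨅ y ∈ {y : C | d y = x}, ENNReal.ofReal (Real.log ‖y‖ - Real.log ‖x‖) := by
  unfold boundaryDepth
  split_ifs with h
  · refine (le_antisymm (iSup₂_le fun x hx => ?_) zero_le).symm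
    obtain ⟨y, hy⟩ := hx.2
    rw [h y] at hy
    exact (hx.1 hy.symm).elim
  · rfl

private lemma iInf_term_le {C : Type*} [NormedAddCommGroup C] (d : C → C) {x y : C}
    (hx : x ≠ 0) (hy0 : y ≠ 0) (hy : d y = x) {M : ℝ} (hM : ‖y‖ < Real.exp M * ‖x‖) :
    (⨅ z ∈ {z : C | d z = x}, ENNReal.ofReal (Real.log ‖z‖ - Real.log ‖x‖))
      ≤ ENNReal.ofReal M := by
  refine le_trans (iInf_le_of_le y (iInf_le_of_le hy le_rfl)) (ENNReal.ofReal_le_ofReal ?_)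
  have hx0 : (0:ℝ) < ‖x‖ := norm_pos_iff.mpr hx
  have hy0' : (0:ℝ) < ‖y‖ := norm_pos_iff.mpr hy0
  have h := Real.log_le_log hy0' hM.le
  rw [Real.log_mul (Real.exp_ne_zero M) hx0.ne', Real.log_exp] at h
  linarith

private lemma exists_bounded_primitive {C : Type*} [NormedAddCommGroup C] (d : C → C)
    {B : ℝ}
    (hle : (⨆ x ∈ {x : C | x ≠ 0 ∧ ∃ y, d y = x},
      ⨅ y ∈ {y : C | d y = x}, ENNReal.ofReal (Real.log ‖y‖ - Real.log ‖x‖))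
        ≤ ENNReal.ofReal B) (hB : 0 ≤ B)
    {u : C} (hu : u ≠ 0) (hbu : ∃ y, d y = u) {ε : ℝ} (hε : 0 < ε) :
    ∃ y, d y = u ∧ ‖y‖ < Real.exp (B + ε) * ‖u‖ := by
  have h1 : (⨅ z ∈ {z : C | d z = u}, ENNReal.ofReal (Real.log ‖z‖ - Real.log ‖u‖))
      < ENNReal.ofReal (B + ε) := by
    refine lt_of_le_of_lt (le_trans (le_iSup₂ (f := fun x _ => ⨅ y ∈ {y : C | d y = x},
      ENNReal.ofReal (Real.log ‖y‖ - Real.log ‖x‖)) u ⟨hu, hbu⟩) hle) ?_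
    exact (ENNReal.ofReal_lt_ofReal_iff (by linarith)).mpr (by linarith)
  rw [iInf_lt_iff] at h1
  obtain ⟨y, hy⟩ := h1
  rw [iInf_lt_iff] at hy
  obtain ⟨hyd, hlt⟩ := hy
  have hlog : Real.log ‖y‖ - Real.log ‖u‖ < B + ε :=
    (ENNReal.ofReal_lt_ofReal_iff (by linarith)).mp hlt
  refine ⟨y, hyd, ?_⟩
  have hu0 : (0:ℝ) < ‖u‖ := norm_pos_iff.mpr hu
  rcases eq_or_ne y 0 with rfl | hy0
  · rw [norm_zero]; positivity
  · have hy0' : (0:ℝ) < ‖y‖ := norm_pos_iff.mpr hy0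
    calc ‖y‖ = Real.exp (Real.log ‖y‖) := (Real.exp_log hy0').symm
    _ < Real.exp (B + ε + Real.log ‖u‖) := Real.exp_lt_exp.mpr (by linarith)
    _ = Real.exp (B + ε) * ‖u‖ := by rw [Real.exp_add, Real.exp_log hu0]

/-- A filtered quasi-isomorphism preserves boundary depth: if
`f : C → D` is a continuous norm-nonincreasing chain map between nonarchimedean normed
chain complexes over a complete nonarchimedean field `K` with surjective absolute value,
and the induced `O`-module map `H(C_{>0}) → H(D_{>0})` is an isomorphism (expressed on
representatives: injectivity says a cycle of norm `< 1` whose image is a boundary of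
`D_{>0}` is a boundary of `C_{>0}`; surjectivity says every cycle of `D_{>0}` agrees with
the image of a cycle of `C_{>0}` up to a boundary of `D_{>0}`), then
`β(C,d_C) = β(D,d_D)`. -/
theorem boundaryDepth_eq_of_filteredQuasiIso
    {K : Type*} [NormedField K] [IsUltrametricDist K] [CompleteSpace K]
    (hsurj : ∀ r : ℝ, 0 < r → ∃ a : K, ‖a‖ = r)
    {C : Type*} [NormedAddCommGroup C] [NormedSpace K C] [CompleteSpace C]
    [IsUltrametricDist C]
    {D : Type*} [NormedAddCommGroup D] [NormedSpace K D] [CompleteSpace D]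
    [IsUltrametricDist D]
    (dC : C →L[K] C) (hdC2 : ∀ x, dC (dC x) = 0) (hdC1 : ∀ x, ‖dC x‖ ≤ ‖x‖)
    (dD : D →L[K] D) (hdD2 : ∀ x, dD (dD x) = 0) (hdD1 : ∀ x, ‖dD x‖ ≤ ‖x‖)
    (f : C →L[K] D) (hchain : ∀ x, f (dC x) = dD (f x)) (hf1 : ∀ x, ‖f x‖ ≤ ‖x‖)
    (hinj : ∀ x : C, ‖x‖ < 1 → dC x = 0 →
      f x ∈ ⇑dD '' {w : D | ‖w‖ < 1} → x ∈ ⇑dC '' {y : C | ‖y‖ < 1})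
    (hsurjH : ∀ w : D, ‖w‖ < 1 → dD w = 0 →
      ∃ x : C, ‖x‖ < 1 ∧ dC x = 0 ∧ f x - w ∈ ⇑dD '' {w' : D | ‖w'‖ < 1}) :
    boundaryDepth (fun x => dC x) = boundaryDepth (fun x => dD x) := by
  -- scaled injectivity
  have hinj' : ∀ r : ℝ, 0 < r → ∀ x : C, ‖x‖ < r → dC x = 0 →
      f x ∈ ⇑dD '' {w : D | ‖w‖ < r} → x ∈ ⇑dC '' {y : C | ‖y‖ < r} := by
    intro r hr x hx hdx hmem
    obtain ⟨w, hw, hfw⟩ := hmem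
    obtain ⟨a, ha⟩ := hsurj r⁻¹ (by positivity)
    have ha0 : a ≠ 0 := by
      intro h; rw [h, norm_zero] at ha
      exact absurd ha.symm (by positivity : (0:ℝ) < r⁻¹).ne'
    have hsmulC : ∀ z : C, ‖z‖ < r → ‖a • z‖ < 1 := by
      intro z hz
      rw [norm_smul, ha]
      calc r⁻¹ * ‖z‖ < r⁻¹ * r := mul_lt_mul_of_pos_left hz (by positivity)
        _ = 1 := inv_mul_cancel₀ hr.ne'
    have hsmulD : ∀ z : D, ‖z‖ < r → ‖a • z‖ < 1 := by
      intro z hz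
      rw [norm_smul, ha]
      calc r⁻¹ * ‖z‖ < r⁻¹ * r := mul_lt_mul_of_pos_left hz (by positivity)
        _ = 1 := inv_mul_cancel₀ hr.ne'
    have h1 : a • x ∈ ⇑dC '' {y : C | ‖y‖ < 1} := by
      refine hinj (a • x) (hsmulC x hx) (by rw [map_smul, hdx, smul_zero]) ?_
      exact ⟨a • w, hsmulD w hw, by rw [map_smul, hfw, map_smul]⟩
    obtain ⟨y1, hy1, hy1e⟩ := h1
    refine ⟨a⁻¹ • y1, ?_, ?_⟩
    · show ‖a⁻¹ • y1‖ < r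
      rw [norm_smul, norm_inv, ha, inv_inv]
      calc r * ‖y1‖ < r * 1 := mul_lt_mul_of_pos_left hy1 hr
        _ = r := mul_one r
    · rw [map_smul, hy1e, smul_smul, inv_mul_cancel₀ ha0, one_smul]
  -- scaled surjectivity
  have hsurjH' : ∀ r : ℝ, 0 < r → ∀ w : D, ‖w‖ < r → dD w = 0 →
      ∃ x : C, ‖x‖ < r ∧ dC x = 0 ∧ f x - w ∈ ⇑dD '' {w' : D | ‖w'‖ < r} := by
    intro r hr w hw hdw
    obtain ⟨a, ha⟩ := hsurj r⁻¹ (by positivity)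
    have ha0 : a ≠ 0 := by
      intro h; rw [h, norm_zero] at ha
      exact absurd ha.symm (by positivity : (0:ℝ) < r⁻¹).ne'
    have hna : ‖a • w‖ < 1 := by
      rw [norm_smul, ha]
      calc r⁻¹ * ‖w‖ < r⁻¹ * r := mul_lt_mul_of_pos_left hw (by positivity)
        _ = 1 := inv_mul_cancel₀ hr.ne'
    obtain ⟨x1, hx1, hdx1, v1, hv1, hv1e⟩ := hsurjH (a • w) hna (by rw [map_smul, hdw, smul_zero])
    have hainv : ‖(a⁻¹ : K)‖ = r := by rw [norm_inv, ha, inv_inv]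
    refine ⟨a⁻¹ • x1, ?_, by rw [map_smul, hdx1, smul_zero], ⟨a⁻¹ • v1, ?_, ?_⟩⟩
    · show ‖a⁻¹ • x1‖ < r
      rw [norm_smul, hainv]
      calc r * ‖x1‖ < r * 1 := mul_lt_mul_of_pos_left hx1 hr
        _ = r := mul_one r
    · show ‖a⁻¹ • v1‖ < r
      rw [norm_smul, hainv]
      calc r * ‖v1‖ < r * 1 := mul_lt_mul_of_pos_left hv1 hr
        _ = r := mul_one r
    · rw [map_smul, hv1e, map_smul, smul_sub, smul_smul, inv_mul_cancel₀ ha0, one_smul]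
  rw [bd_sup_form, bd_sup_form]
  apply le_antisymm
  · -- β(C) ≤ β(D)
    refine ENNReal.le_of_forall_pos_le_add fun ε hε htop => ?_
    set b := (⨆ x ∈ {x : D | x ≠ 0 ∧ ∃ y, dD y = x},
      ⨅ y ∈ {y : D | dD y = x}, ENNReal.ofReal (Real.log ‖y‖ - Real.log ‖x‖)) with hb
    set B : ℝ := b.toReal with hB
    have hB0 : 0 ≤ B := ENNReal.toReal_nonneg
    have hbB : b = ENNReal.ofReal B := (ENNReal.ofReal_toReal htop.ne).symm
    have hδ : (0:ℝ) < (ε:ℝ) := hε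
    have hgoal : (b : ℝ≥0∞) + ε = ENNReal.ofReal B + ENNReal.ofReal (ε:ℝ) := by
      rw [← hbB, ENNReal.ofReal_coe_nnreal]
    refine iSup₂_le fun x hx => ?_
    obtain ⟨hx0, z0, hz0⟩ := hx
    have hxn : (0:ℝ) < ‖x‖ := norm_pos_iff.mpr hx0
    have hdx : dC x = 0 := by rw [← hz0]; exact hdC2 z0
    rw [hgoal, ← ENNReal.ofReal_add hB0 hδ.le]
    by_cases hfx : f x = 0
    · -- image is zero; x is a boundary of arbitrary small value
      have hmem : f x ∈ ⇑dD '' {w : D | ‖w‖ < Real.exp ((ε:ℝ)/2) * ‖x‖} :=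
        ⟨0, by simp only [Set.mem_setOf_eq, norm_zero]; positivity, by rw [map_zero, hfx]⟩
      have hxr : ‖x‖ < Real.exp ((ε:ℝ)/2) * ‖x‖ := by
        nlinarith [Real.add_one_le_exp ((ε:ℝ)/2)]
      obtain ⟨y, hy, hye⟩ := hinj' _ (by positivity) x hxr hdx hmem
      have hy0 : y ≠ 0 := by rintro rfl; rw [map_zero] at hye; exact hx0 hye.symm
      refine le_trans (iInf_term_le _ hx0 hy0 hye (M := (ε:ℝ)/2) hy) ?_
      exact ENNReal.ofReal_le_ofReal (by linarith)
    · -- f x is a nonzero boundary of D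
      have hfb : ∃ v, (fun y => dD y) v = f x :=
        ⟨f z0, by show dD (f z0) = f x; rw [← hchain z0, hz0]⟩
      obtain ⟨v, hv, hvlt⟩ := exists_bounded_primitive (fun y => dD y) (hb ▸ hbB.le) hB0 hfx hfb
        (ε := (ε:ℝ)/2) (by positivity)
      have hR : ‖v‖ < Real.exp (B + (ε:ℝ)) * ‖x‖ := by
        have h2 : ‖f x‖ ≤ ‖x‖ := hf1 x
        have h3 : Real.exp (B + (ε:ℝ)/2) < Real.exp (B + (ε:ℝ)) :=
          Real.exp_lt_exp.mpr (by linarith)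
        nlinarith [Real.exp_pos (B + (ε:ℝ)/2), norm_nonneg (f x)]
      have hxR : ‖x‖ < Real.exp (B + (ε:ℝ)) * ‖x‖ := by
        nlinarith [Real.add_one_le_exp (B + (ε:ℝ))]
      obtain ⟨y, hy, hye⟩ := hinj' _ (by positivity) x hxR hdx
        ⟨v, show ‖v‖ < Real.exp (B + (ε:ℝ)) * ‖x‖ from hR, hv⟩
      have hy0 : y ≠ 0 := by rintro rfl; rw [map_zero] at hye; exact hx0 hye.symm
      exact iInf_term_le _ hx0 hy0 hye (M := B + (ε:ℝ)) hy
  · -- β(D) ≤ β(C)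
    refine ENNReal.le_of_forall_pos_le_add fun ε hε htop => ?_
    set b := (⨆ x ∈ {x : C | x ≠ 0 ∧ ∃ y, dC y = x},
      ⨅ y ∈ {y : C | dC y = x}, ENNReal.ofReal (Real.log ‖y‖ - Real.log ‖x‖)) with hb
    set B : ℝ := b.toReal with hB
    have hB0 : 0 ≤ B := ENNReal.toReal_nonneg
    have hbB : b = ENNReal.ofReal B := (ENNReal.ofReal_toReal htop.ne).symm
    have hδ : (0:ℝ) < (ε:ℝ) := hε
    have hgoal : (b : ℝ≥0∞) + ε = ENNReal.ofReal B + ENNReal.ofReal (ε:ℝ) := by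
      rw [← hbB, ENNReal.ofReal_coe_nnreal]
    refine iSup₂_le fun x hx => ?_
    obtain ⟨hx0, w0, hw0⟩ := hx
    have hxn : (0:ℝ) < ‖x‖ := norm_pos_iff.mpr hx0
    have hdx : dD x = 0 := by rw [← hw0]; exact hdD2 w0
    rw [hgoal, ← ENNReal.ofReal_add hB0 hδ.le]
    set r : ℝ := Real.exp ((ε:ℝ)/2) * ‖x‖ with hrdef
    have hrpos : 0 < r := by positivity
    have hxr : ‖x‖ < r := by
      rw [hrdef]; nlinarith [Real.add_one_le_exp ((ε:ℝ)/2)]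
    obtain ⟨u, hu_lt, hu_cyc, v, hv_lt, hv_eq⟩ := hsurjH' r hrpos x hxr hdx
    rcases eq_or_ne u 0 with rfl | hu0
    · -- then -v bounds x directly
      have hveq : dD (-v) = x := by
        rw [map_neg, hv_eq, map_zero, zero_sub, neg_neg]
      have hv0 : (-v) ≠ 0 := by rintro h; rw [h, map_zero] at hveq; exact hx0 hveq.symm
      have hnv : ‖-v‖ < Real.exp ((ε:ℝ)/2) * ‖x‖ := by rw [norm_neg]; exact hv_lt
      refine le_trans (iInf_term_le _ hx0 hv0 hveq (M := (ε:ℝ)/2) hnv) ?_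
      exact ENNReal.ofReal_le_ofReal (by linarith)
    · -- u is a nonzero cycle of C mapping to a boundary, hence a boundary
      have hfu : f u = dD (w0 + v) := by
        rw [map_add, hw0, hv_eq]; abel
      set R : ℝ := max r (‖w0 + v‖ + 1) with hRdef
      have hRpos : 0 < R := lt_of_lt_of_le hrpos (le_max_left _ _)
      obtain ⟨z, hz_lt, hz_eq⟩ := hinj' R hRpos u (hu_lt.trans_le (le_max_left _ _)) hu_cyc
        ⟨w0 + v, show ‖w0 + v‖ < R from lt_of_lt_of_le (lt_add_one _) (le_max_right _ _),
          hfu.symm⟩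
      obtain ⟨y', hy'd, hy'lt⟩ := exists_bounded_primitive (fun y => dC y) (hb ▸ hbB.le) hB0 hu0
        ⟨z, hz_eq⟩ (ε := (ε:ℝ)/2) (by positivity)
      set y : D := f y' - v with hydef
      have hyx : dD y = x := by
        rw [hydef, map_sub, ← hchain y', hy'd, hv_eq]; abel
      have hy0 : y ≠ 0 := by intro h; rw [h, map_zero] at hyx; exact hx0 hyx.symm
      have hybound : ‖y‖ < Real.exp (B + (ε:ℝ)) * ‖x‖ := by
        have h1 : ‖y‖ ≤ max ‖f y'‖ ‖(-v)‖ := by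
          rw [hydef, sub_eq_add_neg]
          exact IsUltrametricDist.norm_add_le_max _ _
        have h2 : ‖f y'‖ ≤ ‖y'‖ := hf1 y'
        have h3 : ‖y'‖ < Real.exp (B + (ε:ℝ)/2) * ‖u‖ := hy'lt
        have h4 : Real.exp (B + (ε:ℝ)/2) * r = Real.exp (B + (ε:ℝ)) * ‖x‖ := by
          rw [hrdef, ← mul_assoc, ← Real.exp_add]; ring_nf
        have h5 : ‖u‖ < r := hu_lt
        have h6 : ‖(-v)‖ < r := by rw [norm_neg]; exact hv_lt
        have h7 : r ≤ Real.exp (B + (ε:ℝ)) * ‖x‖ := by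
          rw [hrdef]
          have : Real.exp ((ε:ℝ)/2) ≤ Real.exp (B + (ε:ℝ)) :=
            Real.exp_le_exp.mpr (by linarith)
          nlinarith
        rcases max_cases ‖f y'‖ ‖(-v)‖ with ⟨he, _⟩ | ⟨he, _⟩ <;> rw [he] at h1
        · have := Real.exp_pos (B + (ε:ℝ)/2)
          nlinarith
        · linarith
      exact iInf_term_le _ hx0 hy0 hyx (M := B + (ε:ℝ)) hybound
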